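/- For a ribbon graph (H, σ₀, σ₁), the integer |V(Γ)| − |E(Γ)| + |C(Γ)| is even, where |V(Γ)| is the number of orbits of σ₀ on H, |E(Γ)| is the number of orbits of σ₁ on H (which equals |H|/2), and |C(Γ)| is the number of orbits of σ∞ = σ₀⁻¹σ₁ on H. (This is the parity statement which makes the genus formula g = (2 − χ − n)/2 of each connected component, with χ = |V| − |E| and n the number of boundary cycles, yield an integer.) -/

import Mathlib

noncomputable section

/-- The number of orbits of (the cyclic group generated by) a permutation `σ` on `H`. -/
def numOrbits {H : Type*} [Fintype H] (σ : Equiv.Perm H) : ℕ :=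
  Nat.card (MulAction.orbitRel.Quotient (Subgroup.zpowers σ) H)

open Equiv.Perm in
/-- Orbit relation of `zpowers σ` is `SameCycle`. -/
lemma orbitRel_iff_sameCycle {H : Type*} [Fintype H] (σ : Equiv.Perm H) (x y : H) :
    MulAction.orbitRel (Subgroup.zpowers σ) H x y ↔ σ.SameCycle y x := by
  constructor
  · rintro ⟨⟨g, k, rfl⟩, rfl⟩
    exact ⟨k, rfl⟩
  · rintro ⟨k, rfl⟩
    exact ⟨⟨σ ^ k, k, rfl⟩, rfl⟩

open Equiv.Perm in
lemma numOrbits_eq {H : Type*} [Fintype H] [DecidableEq H] (σ : Equiv.Perm H) :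
    numOrbits σ = (Fintype.card H - σ.support.card) + σ.cycleFactorsFinset.card := by
  classical
  set F : H → ({x : H // x ∉ σ.support} ⊕ σ.cycleFactorsFinset) := fun x =>
    if h : x ∈ σ.support then
      Sum.inr ⟨σ.cycleOf x, cycleOf_mem_cycleFactorsFinset_iff.2 h⟩
    else Sum.inl ⟨x, h⟩ with hF
  have hwd : ∀ x y : H, MulAction.orbitRel (Subgroup.zpowers σ) H x y → F x = F y := by
    intro x y hxy
    have hsc : σ.SameCycle y x := (orbitRel_iff_sameCycle σ x y).1 hxy
    by_cases hx : x ∈ σ.support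
    · have hy : y ∈ σ.support := by
        by_contra hy
        obtain ⟨k, hk⟩ := hsc
        rw [Equiv.Perm.zpow_apply_eq_self_of_apply_eq_self (by simpa using hy) k] at hk
        exact (hk ▸ hy) hx
      simp only [hF, dif_pos hx, dif_pos hy]
      exact congrArg _ (Subtype.ext hsc.cycleOf_eq.symm)
    · obtain ⟨k, hk⟩ := hsc.symm
      have hyx : y = x := by
        rw [← hk, Equiv.Perm.zpow_apply_eq_self_of_apply_eq_self (by simpa using hx) k]
      have hy : y ∉ σ.support := hyx ▸ hx
      simp only [hF, dif_neg hx, dif_neg hy]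
      exact congrArg _ (Subtype.ext hyx.symm)
  have hinjF : ∀ x y : H, F x = F y → σ.SameCycle y x := by
    intro x y h
    by_cases hx : x ∈ σ.support <;> by_cases hy : y ∈ σ.support
    · rw [hF] at h
      simp only [dif_pos hx, dif_pos hy] at h
      injection h with h'
      have hceq : σ.cycleOf x = σ.cycleOf y := congrArg Subtype.val h'
      have : y ∈ (σ.cycleOf x).support := by
        rw [hceq, mem_support_cycleOf_iff]
        exact ⟨Equiv.Perm.SameCycle.refl _ _, hy⟩
      exact ((mem_support_cycleOf_iff.1 this).1).symm
    · rw [hF] at h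
      simp only [dif_pos hx, dif_neg hy] at h
      exact absurd h (by simp)
    · rw [hF] at h
      simp only [dif_neg hx, dif_pos hy] at h
      exact absurd h (by simp)
    · rw [hF] at h
      simp only [dif_neg hx, dif_neg hy] at h
      injection h with h'
      have hxy : x = y := congrArg Subtype.val h'
      exact hxy ▸ Equiv.Perm.SameCycle.refl _ _
  have key : MulAction.orbitRel.Quotient (Subgroup.zpowers σ) H ≃
      ({x : H // x ∉ σ.support} ⊕ σ.cycleFactorsFinset) := by
    refine Equiv.ofBijective (Quotient.lift F hwd) ⟨?_, ?_⟩
    · rintro ⟨x⟩ ⟨y⟩ h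
      have h2 : F x = F y := h
      exact Quotient.sound ((orbitRel_iff_sameCycle σ x y).2 (hinjF x y h2))
    · rintro (⟨x, hx⟩ | ⟨c, hc⟩)
      · refine ⟨Quotient.mk _ x, ?_⟩
        show F x = _
        simp only [hF, dif_neg hx]
      · obtain ⟨x, hx⟩ := (mem_cycleFactorsFinset_iff.1 hc).1.nonempty_support
        have hxs : x ∈ σ.support := mem_cycleFactorsFinset_support_le hc hx
        refine ⟨Quotient.mk _ x, ?_⟩
        show F x = _
        simp only [hF, dif_pos hxs]
        exact congrArg _ (Subtype.ext (cycle_is_cycleOf hx hc).symm)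
  unfold numOrbits
  rw [Nat.card_congr key, Nat.card_sum, Nat.card_eq_fintype_card,
    Nat.card_eq_fintype_card, Fintype.card_coe, Fintype.card_subtype_compl]
  congr 1
  simp [Fintype.card_subtype, Equiv.Perm.support]


lemma zmodcast_even {a : ℕ} (h : Even a) : (a : ZMod 2) = 0 := by
  obtain ⟨m, rfl⟩ := h
  push_cast
  rw [← two_mul, show (2 : ZMod 2) = 0 from by decide, zero_mul]

lemma zmod_of_neg_one_pow {a b : ℕ} (h : ((-1 : ℤˣ)) ^ a = (-1) ^ b) :
    (a : ZMod 2) = (b : ZMod 2) := by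
  rcases Nat.even_or_odd a with ha | ha <;> rcases Nat.even_or_odd b with hb | hb
  · rw [zmodcast_even ha, zmodcast_even hb]
  · rw [ha.neg_one_pow, hb.neg_one_pow] at h
    exact absurd h (by decide)
  · rw [ha.neg_one_pow, hb.neg_one_pow] at h
    exact absurd h (by decide)
  · obtain ⟨m, rfl⟩ := ha
    obtain ⟨k, rfl⟩ := hb
    push_cast
    rw [show (2 : ZMod 2) = 0 from by decide]
    ring

open Equiv.Perm in
/-- `numOrbits` mod 2 in terms of the sign data. -/
lemma numOrbits_zmod {H : Type*} [Fintype H] [DecidableEq H] (σ : Equiv.Perm H) :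
    ((numOrbits σ : ZMod 2)) =
      (Fintype.card H : ZMod 2) + σ.support.card + Multiset.card σ.cycleType := by
  have hs : σ.support.card ≤ Fintype.card H := Finset.card_le_univ _
  have hk : σ.cycleFactorsFinset.card = Multiset.card σ.cycleType := by
    rw [cycleType_def, Multiset.card_map]
    rfl
  rw [numOrbits_eq, hk]
  push_cast [Nat.cast_sub hs]
  have htwo : (2 : ZMod 2) = 0 := by decide
  linear_combination (-(σ.support.card : ZMod 2)) * htwo

theorem ribbonGraph_euler_parity {H : Type*} [Fintype H] (σ₀ σ₁ : Equiv.Perm H)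
    (hinv : ∀ h, σ₁ (σ₁ h) = h) (hfix : ∀ h, σ₁ h ≠ h) :
    Even ((numOrbits σ₀ : ℤ) - (numOrbits σ₁ : ℤ) + (numOrbits (σ₀⁻¹ * σ₁) : ℤ)) := by
  classical
  -- `card H` is even since `σ₁` is a fixed-point-free involution
  have hσ₁sq : σ₁ ^ 2 = 1 := by
    ext h
    simp [pow_two, hinv h]
  have hsupp : σ₁.support = Finset.univ := by
    ext x
    simp [Equiv.Perm.mem_support, hfix x]
  have hall2 : ∀ m ∈ σ₁.cycleType, m = 2 := by
    intro m hm
    have hdvd : m ∣ 2 := by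
      have h1 := Multiset.dvd_lcm hm
      rw [Equiv.Perm.lcm_cycleType] at h1
      exact h1.trans (orderOf_dvd_of_pow_eq_one hσ₁sq)
    have h2 := Equiv.Perm.two_le_of_mem_cycleType hm
    have := Nat.le_of_dvd (by norm_num) hdvd
    omega
  have hn : Fintype.card H = 2 * Multiset.card σ₁.cycleType := by
    have hsum := Equiv.Perm.sum_cycleType σ₁
    rw [hsupp, Finset.card_univ] at hsum
    have hrep : σ₁.cycleType = Multiset.replicate (Multiset.card σ₁.cycleType) 2 :=
      Multiset.eq_replicate.2 ⟨rfl, hall2⟩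
    have hc := congrArg Multiset.sum hrep
    rw [Multiset.sum_replicate, smul_eq_mul] at hc
    omega
  have hneven : Even (Fintype.card H) := ⟨Multiset.card σ₁.cycleType, by omega⟩
  -- sign multiplicativity gives a parity relation among the cycle data
  have hsign : ∀ σ : Equiv.Perm H,
      Equiv.Perm.sign σ = (-1 : ℤˣ) ^ (σ.support.card + Multiset.card σ.cycleType) := by
    intro σ
    rw [Equiv.Perm.sign_of_cycleType, Equiv.Perm.sum_cycleType]
  have hmul : ((-1 : ℤˣ)) ^
        ((σ₀⁻¹ * σ₁).support.card + Multiset.card (σ₀⁻¹ * σ₁).cycleType)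
      = (-1) ^ ((σ₀.support.card + Multiset.card σ₀.cycleType) +
          (σ₁.support.card + Multiset.card σ₁.cycleType)) :=
    calc ((-1 : ℤˣ)) ^ ((σ₀⁻¹ * σ₁).support.card + Multiset.card (σ₀⁻¹ * σ₁).cycleType)
        = Equiv.Perm.sign (σ₀⁻¹ * σ₁) := (hsign _).symm
      _ = Equiv.Perm.sign σ₀ * Equiv.Perm.sign σ₁ := by
          rw [Equiv.Perm.sign_mul, Equiv.Perm.sign_inv]
      _ = (-1) ^ (σ₀.support.card + Multiset.card σ₀.cycleType) *
          (-1) ^ (σ₁.support.card + Multiset.card σ₁.cycleType) := by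
          rw [hsign, hsign]
      _ = (-1) ^ ((σ₀.support.card + Multiset.card σ₀.cycleType) +
          (σ₁.support.card + Multiset.card σ₁.cycleType)) := (pow_add _ _ _).symm
  have hemod := zmod_of_neg_one_pow hmul
  push_cast at hemod
  -- total parity
  have htot : ((numOrbits σ₀ + numOrbits σ₁ + numOrbits (σ₀⁻¹ * σ₁) : ℕ) : ZMod 2) = 0 := by
    push_cast
    rw [numOrbits_zmod, numOrbits_zmod, numOrbits_zmod, zmodcast_even hneven]
    have htwo : (2 : ZMod 2) = 0 := by decide
    linear_combination hemod + ((σ₀.support.card : ZMod 2) + Multiset.card σ₀.cycleType +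
      σ₁.support.card + Multiset.card σ₁.cycleType) * htwo
  have heven : Even (numOrbits σ₀ + numOrbits σ₁ + numOrbits (σ₀⁻¹ * σ₁)) := by
    obtain ⟨k, hk⟩ := (ZMod.natCast_eq_zero_iff _ 2).1 htot
    exact ⟨k, by omega⟩
  have hrw : (numOrbits σ₀ : ℤ) - (numOrbits σ₁ : ℤ) + (numOrbits (σ₀⁻¹ * σ₁) : ℤ) =
      ((numOrbits σ₀ + numOrbits σ₁ + numOrbits (σ₀⁻¹ * σ₁) : ℕ) : ℤ) -
        2 * (numOrbits σ₁ : ℤ) := by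
    push_cast
    ring
  rw [hrw]
  exact (Even.sub (by exact_mod_cast heven.natCast) (even_two_mul _))
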